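/- arXiv:2004.07118 — 3 statements merged into one kernel-verified Lean document; each statement's English description precedes it below -/
import Mathlib

section
/- Let G be a complete edge-colored graph and assume that for every strong prime module M of G with |M| ≥ 2 the quotient graph G[M]/P_max(M) is a complete edge-colored permutation graph. Then G is a complete edge-colored permutation graph. -/
/-- The edge relation `E` on `V` together with the labeling `ℓ : V ≃ Fin n`
is the simple permutation graph of the permutation `π` of `{1,…,n}`:
`{u,v} ∈ E ⇔ ℓ(u) > ℓ(v) and π⁻¹(ℓ(u)) < π⁻¹(ℓ(v))` (stated symmetrically in `u,v`). -/
def IsPermGraph {V : Type*} {n : ℕ} (E : V → V → Prop) (ℓ : V ≃ Fin n)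
    (π : Equiv.Perm (Fin n)) : Prop :=
  ∀ u v : V, E u v ↔
    ((ℓ v < ℓ u ∧ π⁻¹ (ℓ u) < π⁻¹ (ℓ v)) ∨ (ℓ u < ℓ v ∧ π⁻¹ (ℓ v) < π⁻¹ (ℓ u)))

/-- `c` is the edge-coloring of a complete `k`-edge-colored graph on `V`:
it is symmetric, every pair of distinct vertices receives a color in `{1,…,k}`,
and every color in `{1,…,k}` occurs on some edge. -/
def IsCompleteColoring {V : Type*} (k : ℕ) (c : V → V → ℕ) : Prop :=
  (∀ u v : V, c u v = c v u) ∧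
  (∀ u v : V, u ≠ v → c u v ∈ Finset.Icc 1 k) ∧
  (∀ i ∈ Finset.Icc 1 k, ∃ u v : V, u ≠ v ∧ c u v = i)

/-- The edge relation of the `i`-th monochromatic subgraph `G_{|i}`. -/
def monoEdge {V : Type*} (c : V → V → ℕ) (i : ℕ) : V → V → Prop :=
  fun u v => u ≠ v ∧ c u v = i

/-- The complete edge-colored graph with coloring `c` is a complete edge-colored
permutation graph: there are a labeling `ℓ` and permutations `π i` such that every
monochromatic subgraph `(G_{|i}, ℓ)` is the simple permutation graph of `π i`. -/
def IsCECPG {V : Type*} [Fintype V] (c : V → V → ℕ) : Prop :=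
  ∃ (ℓ : V ≃ Fin (Fintype.card V)) (π : ℕ → Equiv.Perm (Fin (Fintype.card V))),
    ∀ i : ℕ, IsPermGraph (monoEdge c i) ℓ (π i)

/-- `c` contains a rainbow triangle: three vertices whose three connecting edges
have pairwise distinct colors. -/
def HasRainbowTriangle {V : Type*} (c : V → V → ℕ) : Prop :=
  ∃ u v w : V, u ≠ v ∧ u ≠ w ∧ v ≠ w ∧
    c u v ≠ c u w ∧ c u v ≠ c v w ∧ c u w ≠ c v w

/-- `M` is a module of the complete edge-colored graph with coloring `c`. -/
def IsModule {V : Type*} (c : V → V → ℕ) (M : Set V) : Prop :=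
  ∀ u ∈ M, ∀ w ∈ M, ∀ v ∉ M, c u v = c w v

/-- `M` is a strong module: a module that overlaps no other module. -/
def IsStrongModule {V : Type*} (c : V → V → ℕ) (M : Set V) : Prop :=
  IsModule c M ∧ ∀ M' : Set V, IsModule c M' → M ⊆ M' ∨ M' ⊆ M ∨ M ∩ M' = ∅

/-- `N` is a member of `P_max(M)`: a non-empty strong module that is a proper subset
of `M` and is inclusion-maximal among strong modules properly contained in `M`. -/
def PmaxPart {V : Type*} (c : V → V → ℕ) (M N : Set V) : Prop :=
  N.Nonempty ∧ IsStrongModule c N ∧ N ⊂ M ∧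
    ∀ N' : Set V, IsStrongModule c N' → N' ⊂ M → N ⊆ N' → N' = N

/-- The edge relation of the `i`-th monochromatic subgraph of the quotient graph
`G[M]/P_max(M)`: two distinct parts are adjacent with color `i` iff some (equivalently,
by the module property, every) edge between them has color `i`. -/
def quotientMonoEdge {V : Type*} (c : V → V → ℕ) (M : Set V) (i : ℕ) :
    {N : Set V // PmaxPart c M N} → {N : Set V // PmaxPart c M N} → Prop :=
  fun N₁ N₂ => N₁ ≠ N₂ ∧ ∃ u ∈ N₁.1, ∃ v ∈ N₂.1, c u v = i

/-- The quotient graph `G[M]/P_max(M)` is a complete edge-colored permutation graph. -/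
def QuotientIsCECPG {V : Type*} (c : V → V → ℕ) (M : Set V) : Prop :=
  ∃ (m : ℕ) (ℓ : {N : Set V // PmaxPart c M N} ≃ Fin m)
    (π : ℕ → Equiv.Perm (Fin m)),
    ∀ i : ℕ, IsPermGraph (quotientMonoEdge c M i) ℓ (π i)

/-- The strong module `M` (with `|M| ≥ 2`) is series: its quotient graph has at least
two vertices and all its edges carry the same color. -/
def IsSeriesModule {V : Type*} (c : V → V → ℕ) (M : Set V) : Prop :=
  (∃ N₁ N₂ : Set V, PmaxPart c M N₁ ∧ PmaxPart c M N₂ ∧ N₁ ≠ N₂) ∧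
  (∀ N₁ N₂ N₁' N₂' : Set V, PmaxPart c M N₁ → PmaxPart c M N₂ →
    PmaxPart c M N₁' → PmaxPart c M N₂' → N₁ ≠ N₂ → N₁' ≠ N₂' →
    ∀ u v u' v' : V, u ∈ N₁ → v ∈ N₂ → u' ∈ N₁' → v' ∈ N₂' → c u v = c u' v')

/-- The color `i` appears on some edge of the quotient graph `G[M]/P_max(M)`. -/
def QuotientColorAppears {V : Type*} (c : V → V → ℕ) (M : Set V) (i : ℕ) : Prop :=
  ∃ N₁ N₂ : Set V, PmaxPart c M N₁ ∧ PmaxPart c M N₂ ∧ N₁ ≠ N₂ ∧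
    ∃ u ∈ N₁, ∃ v ∈ N₂, c u v = i

section Aux
variable {V : Type*} {c : V → V → ℕ}

lemma univ_strong : IsStrongModule c (Set.univ : Set V) := by
  constructor
  · intro u _ w _ v hv; exact absurd (Set.mem_univ v) hv
  · intro M' _; right; left; exact Set.subset_univ _

lemma singleton_strong (x : V) : IsStrongModule c {x} := by
  constructor
  · intro u hu w hw v _
    simp only [Set.mem_singleton_iff] at hu hw; rw [hu, hw]
  · intro M' _
    by_cases hx : x ∈ M'
    · left; simpa using hx
    · right; right
      ext y; simp only [Set.mem_inter_iff, Set.mem_singleton_iff, Set.mem_empty_iff_false,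
        iff_false, not_and]
      rintro rfl; exact hx

lemma exists_part [Finite V] {M : Set V} (h2 : 2 ≤ M.ncard)
    {x : V} (hx : x ∈ M) : ∃ N : Set V, PmaxPart c M N ∧ x ∈ N := by
  classical
  set F : Set (Set V) := {S | IsStrongModule c S ∧ x ∈ S ∧ S ⊂ M} with hF
  have hxF : ({x} : Set V) ∈ F := by
    refine ⟨singleton_strong x, rfl, ?_⟩
    rw [Set.ssubset_iff_of_subset (by simpa using hx)]
    have : 1 < M.ncard := h2
    rw [Set.one_lt_ncard_iff (Set.toFinite M)] at this
    obtain ⟨a, b, ha, hb, hab⟩ := this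
    by_cases hax : a = x
    · exact ⟨b, hb, by simp [← hax]; tauto⟩
    · exact ⟨a, ha, by simpa using hax⟩
  obtain ⟨N, hNF, hNmax'⟩ := Set.Finite.exists_maximalFor Set.ncard F (Set.toFinite F) ⟨{x}, hxF⟩
  have hNmax : ∀ N' ∈ F, N.ncard ≤ N'.ncard → N.ncard = N'.ncard :=
    fun N' h h' => le_antisymm h' (hNmax' h h')
  obtain ⟨hNs, hxN, hNM⟩ := hNF
  refine ⟨N, ⟨⟨x, hxN⟩, hNs, hNM, ?_⟩, hxN⟩
  intro N' hN's hN'M hNN'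
  have hN'F : N' ∈ F := ⟨hN's, hNN' hxN, hN'M⟩
  have hle : N.ncard ≤ N'.ncard := Set.ncard_le_ncard hNN' (Set.toFinite N')
  have := hNmax N' hN'F hle
  exact (Set.eq_of_subset_of_ncard_le hNN' this.ge (Set.toFinite N')).symm

lemma part_unique {M N₁ N₂ : Set V} (h1 : PmaxPart c M N₁) (h2 : PmaxPart c M N₂)
    {x : V} (hx1 : x ∈ N₁) (hx2 : x ∈ N₂) : N₁ = N₂ := by
  rcases h1.2.1.2 N₂ h2.2.1.1 with h | h | h
  · exact (h1.2.2.2 N₂ h2.2.1 h2.2.2.1 h).symm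
  · exact h2.2.2.2 N₁ h1.2.1 h1.2.2.1 h
  · exact absurd (Set.mem_inter hx1 hx2) (by rw [h]; exact id)

lemma cross_color (hsymm : ∀ u v : V, c u v = c v u)
    {M N₁ N₂ : Set V} (h1 : PmaxPart c M N₁) (h2 : PmaxPart c M N₂) (hne : N₁ ≠ N₂)
    {u u' v v' : V} (hu : u ∈ N₁) (hu' : u' ∈ N₁) (hv : v ∈ N₂) (hv' : v' ∈ N₂) :
    c u v = c u' v' := by
  have hvN1 : v ∉ N₁ := fun h => hne (part_unique h1 h2 h hv)
  have hv'N1 : v' ∉ N₁ := fun h => hne (part_unique h1 h2 h hv')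
  have hu'N2 : u' ∉ N₂ := fun h => hne (part_unique h1 h2 hu' h)
  calc c u v = c u' v := h1.2.1.1 u hu u' hu' v hvN1
    _ = c v u' := hsymm _ _
    _ = c v' u' := h2.2.1.1 v hv v' hv' u' hu'N2
    _ = c u' v' := hsymm _ _


/-- Per-color triple condition together with linear-order axioms on `M`. -/
def GoodOrder (c : V → V → ℕ) (r : V → V → Prop) (M : Set V) : Prop :=
  (∀ x ∈ M, ¬ r x x) ∧
  (∀ x ∈ M, ∀ y ∈ M, x ≠ y → r x y ∨ r y x) ∧
  (∀ x ∈ M, ∀ y ∈ M, ∀ z ∈ M, x ∈ M → r x y → r y z → r x z) ∧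
  (∀ u ∈ M, ∀ v ∈ M, ∀ w ∈ M, r u v → r v w →
    ((c u w = c u v ∨ c u w = c v w) ∧ (c u v = c v w → c u w = c u v)))

lemma quotient_key [Finite V] (hsymm : ∀ u v : V, c u v = c v u) {M : Set V}
    (hcec : ¬ IsSeriesModule c M → QuotientIsCECPG c M) :
    ∃ g : {N : Set V // PmaxPart c M N} → ℕ, Function.Injective g ∧
      ∀ (A B C : {N : Set V // PmaxPart c M N}), g A < g B → g B < g C →
        ∀ u ∈ A.1, ∀ v ∈ B.1, ∀ w ∈ C.1,
          (c u w = c u v ∨ c u w = c v w) ∧ (c u v = c v w → c u w = c u v) := by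
  classical
  have hne : ∀ (A B : {N : Set V // PmaxPart c M N}), A ≠ B → A.1 ≠ B.1 :=
    fun A B h h' => h (Subtype.ext h')
  by_cases hser : IsSeriesModule c M
  · obtain ⟨n, ⟨e⟩⟩ := Finite.exists_equiv_fin {N : Set V // PmaxPart c M N}
    refine ⟨fun N => (e N).val, fun A B h => e.injective (Fin.ext h), ?_⟩
    intro A B C hAB hBC u hu v hv w hw
    have hAneB : A ≠ B := fun h => by subst h; omega
    have hBneC : B ≠ C := fun h => by subst h; omega
    have hAneC : A ≠ C := fun h => by subst h; omega
    have h1 : c u v = c v w :=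
      hser.2 A.1 B.1 B.1 C.1 A.2 B.2 B.2 C.2 (hne _ _ hAneB) (hne _ _ hBneC) u v v w hu hv hv hw
    have h2 : c u v = c u w :=
      hser.2 A.1 B.1 A.1 C.1 A.2 B.2 A.2 C.2 (hne _ _ hAneB) (hne _ _ hAneC) u v u w hu hv hu hw
    exact ⟨Or.inl h2.symm, fun _ => h2.symm⟩
  · obtain ⟨m, ℓ, π, hP⟩ := hcec hser
    refine ⟨fun N => (ℓ N).val, fun A B h => ℓ.injective (Fin.ext h), ?_⟩
    intro A B C hAB hBC u hu v hv w hw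
    have hAB' : ℓ A < ℓ B := hAB
    have hBC' : ℓ B < ℓ C := hBC
    have hAC' : ℓ A < ℓ C := lt_trans hAB' hBC'
    have hAneB : A ≠ B := fun h => by subst h; exact lt_irrefl _ hAB'
    have hBneC : B ≠ C := fun h => by subst h; exact lt_irrefl _ hBC'
    have hAneC : A ≠ C := fun h => by subst h; exact lt_irrefl _ hAC'
    -- edge facts
    have eAB : ∀ i, c u v = i → (π i)⁻¹ (ℓ B) < (π i)⁻¹ (ℓ A) := by
      intro i hi
      have := (hP i A B).1 ⟨hAneB, u, hu, v, hv, hi⟩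
      rcases this with ⟨h, _⟩ | ⟨_, h⟩
      · exact absurd hAB' (not_lt.mpr h.le)
      · exact h
    have eBC : ∀ i, c v w = i → (π i)⁻¹ (ℓ C) < (π i)⁻¹ (ℓ B) := by
      intro i hi
      have := (hP i B C).1 ⟨hBneC, v, hv, w, hw, hi⟩
      rcases this with ⟨h, _⟩ | ⟨_, h⟩
      · exact absurd hBC' (not_lt.mpr h.le)
      · exact h
    have eAC : ∀ i, c u w = i → (π i)⁻¹ (ℓ C) < (π i)⁻¹ (ℓ A) := by
      intro i hi
      have := (hP i A C).1 ⟨hAneC, u, hu, w, hw, hi⟩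
      rcases this with ⟨h, _⟩ | ⟨_, h⟩
      · exact absurd hAC' (not_lt.mpr h.le)
      · exact h
    have nAB : ∀ i, c u v ≠ i → (π i)⁻¹ (ℓ A) < (π i)⁻¹ (ℓ B) := by
      intro i hi
      have hno : ¬ quotientMonoEdge c M i A B := by
        rintro ⟨_, u', hu', v', hv', h⟩
        exact hi ((cross_color hsymm A.2 B.2 (hne _ _ hAneB) hu hu' hv hv').trans h)
      rw [hP i A B] at hno
      push_neg at hno
      have h2 := hno.2 hAB'
      rcases lt_or_eq_of_le h2 with h | h
      · exact h
      · exact absurd (ℓ.injective ((π i)⁻¹.injective h)) hAneB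
    have nBC : ∀ i, c v w ≠ i → (π i)⁻¹ (ℓ B) < (π i)⁻¹ (ℓ C) := by
      intro i hi
      have hno : ¬ quotientMonoEdge c M i B C := by
        rintro ⟨_, v', hv', w', hw', h⟩
        exact hi ((cross_color hsymm B.2 C.2 (hne _ _ hBneC) hv hv' hw hw').trans h)
      rw [hP i B C] at hno
      push_neg at hno
      have h2 := hno.2 hBC'
      rcases lt_or_eq_of_le h2 with h | h
      · exact h
      · exact absurd (ℓ.injective ((π i)⁻¹.injective h)) hBneC
    constructor
    · by_contra hcon
      push_neg at hcon
      obtain ⟨h1, h2⟩ := hcon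
      have a1 := nAB (c u w) (fun h => h1 h.symm)
      have a2 := nBC (c u w) (fun h => h2 h.symm)
      have a3 := eAC (c u w) rfl
      exact absurd (lt_trans a1 a2) (not_lt.mpr a3.le)
    · intro hij
      have b1 := eAB (c u v) rfl
      have b2 := eBC (c u v) hij.symm
      have b3 : (π (c u v))⁻¹ (ℓ C) < (π (c u v))⁻¹ (ℓ A) := lt_trans b2 b1
      have hedge : quotientMonoEdge c M (c u v) A C := (hP (c u v) A C).2 (Or.inr ⟨hAC', b3⟩)
      obtain ⟨_, u', hu', w', hw', h⟩ := hedge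
      exact (cross_color hsymm A.2 C.2 (hne _ _ hAneC) hu hu' hw hw').trans h

lemma goodOrder_exists [Finite V] (hsymm : ∀ u v : V, c u v = c v u)
    (hq : ∀ M : Set V, IsStrongModule c M → 2 ≤ M.ncard → ¬ IsSeriesModule c M →
      QuotientIsCECPG c M) :
    ∀ (n : ℕ) (M : Set V), M.ncard ≤ n → IsStrongModule c M →
      ∃ r : V → V → Prop, GoodOrder c r M := by
  classical
  intro n
  induction n with
  | zero =>
    intro M hle _
    refine ⟨fun _ _ => False, fun x _ h => h, fun x hx y hy hxy => ?_, by tauto, by tauto⟩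
    exfalso
    have : 1 < M.ncard := (Set.one_lt_ncard_iff (Set.toFinite M)).mpr ⟨x, y, hx, hy, hxy⟩
    omega
  | succ n ih =>
    intro M hle hM
    by_cases h1 : M.ncard ≤ 1
    · refine ⟨fun _ _ => False, fun x _ h => h, fun x hx y hy hxy => ?_, by tauto, by tauto⟩
      exfalso
      have : 1 < M.ncard := (Set.one_lt_ncard_iff (Set.toFinite M)).mpr ⟨x, y, hx, hy, hxy⟩
      omega
    · push_neg at h1
      have h2 : 2 ≤ M.ncard := h1
      have hex : ∀ x ∈ M, ∃ N : Set V, PmaxPart c M N ∧ x ∈ N := fun x hx => exists_part h2 hx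
      set P : V → Set V := fun x => if hx : x ∈ M then (hex x hx).choose else ∅ with hPdef
      have hP : ∀ x ∈ M, PmaxPart c M (P x) ∧ x ∈ P x := by
        intro x hx
        simp only [hPdef, dif_pos hx]
        exact (hex x hx).choose_spec
      have hPuniq : ∀ x ∈ M, ∀ N, PmaxPart c M N → x ∈ N → P x = N := by
        intro x hx N hN hxN
        exact part_unique (hP x hx).1 hN (hP x hx).2 hxN
      have hsub : ∀ N : Set V, PmaxPart c M N → ∃ r, GoodOrder c r N := by
        intro N hN
        refine ih N ?_ hN.2.1
        have := Set.ncard_lt_ncard hN.2.2.1 (Set.toFinite M)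
        omega
      set ρ : Set V → (V → V → Prop) :=
        fun N => if hN : PmaxPart c M N then (hsub N hN).choose else fun _ _ => False with hρdef
      have hρ : ∀ N, (hN : PmaxPart c M N) → GoodOrder c (ρ N) N := by
        intro N hN
        simp only [hρdef, dif_pos hN]
        exact (hsub N hN).choose_spec
      obtain ⟨g, ginj, gtriple⟩ := quotient_key hsymm (hq M hM h2)
      set Q : Set V → Set V → Prop :=
        fun A B => ∃ (hA : PmaxPart c M A) (hB : PmaxPart c M B),
          g ⟨A, hA⟩ < g ⟨B, hB⟩ with hQdef
      have Qirr : ∀ A, ¬ Q A A := by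
        rintro A ⟨hA, hA', hlt⟩
        exact lt_irrefl _ hlt
      have Qne : ∀ A B, Q A B → A ≠ B := by
        rintro A B hQ rfl; exact Qirr A hQ
      have Qtot : ∀ A B, PmaxPart c M A → PmaxPart c M B → A ≠ B → Q A B ∨ Q B A := by
        intro A B hA hB hne
        have : g ⟨A, hA⟩ ≠ g ⟨B, hB⟩ := fun h => hne (congrArg Subtype.val (ginj h))
        rcases this.lt_or_gt with h | h
        · exact Or.inl ⟨hA, hB, h⟩
        · exact Or.inr ⟨hB, hA, h⟩
      have Qtr : ∀ A B C, Q A B → Q B C → Q A C := by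
        rintro A B C ⟨hA, hB, h⟩ ⟨hB', hC, h'⟩
        exact ⟨hA, hC, lt_trans h h'⟩
      set r : V → V → Prop :=
        fun x y => Q (P x) (P y) ∨ (P x = P y ∧ ρ (P x) x y) with hrdef
      refine ⟨r, ?_, ?_, ?_, ?_⟩
      · rintro x hx (hQ | ⟨-, hρx⟩)
        · exact Qirr _ hQ
        · exact (hρ _ (hP x hx).1).1 x (hP x hx).2 hρx
      · intro x hx y hy hxy
        by_cases hPxy : P x = P y
        · have hyPx : y ∈ P x := hPxy ▸ (hP y hy).2
          rcases (hρ _ (hP x hx).1).2.1 x (hP x hx).2 y hyPx hxy with h | h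
          · exact Or.inl (Or.inr ⟨hPxy, h⟩)
          · exact Or.inr (Or.inr ⟨hPxy.symm, by rwa [← hPxy]⟩)
        · rcases Qtot _ _ (hP x hx).1 (hP y hy).1 hPxy with h | h
          · exact Or.inl (Or.inl h)
          · exact Or.inr (Or.inl h)
      · rintro x hx y hy z hz - (hQ | ⟨he, hρ1⟩) (hQ' | ⟨he', hρ2⟩)
        · exact Or.inl (Qtr _ _ _ hQ hQ')
        · exact Or.inl (he' ▸ hQ)
        · exact Or.inl (he ▸ hQ')
        · refine Or.inr ⟨he.trans he', ?_⟩
          have hyPx : y ∈ P x := he ▸ (hP y hy).2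
          have hzPx : z ∈ P x := (he.trans he') ▸ (hP z hz).2
          have hρ2' : ρ (P x) y z := he ▸ hρ2
          exact (hρ _ (hP x hx).1).2.2.1 x (hP x hx).2 y hyPx z hzPx (hP x hx).2 hρ1 hρ2'
      · rintro u hu v hv w hw (hQ | ⟨he, hρ1⟩) (hQ' | ⟨he', hρ2⟩)
        · obtain ⟨hA, hB, hlt⟩ := hQ
          obtain ⟨hB', hC, hlt'⟩ := hQ'
          exact gtriple ⟨P u, hA⟩ ⟨P v, hB⟩ ⟨P w, hC⟩ hlt hlt'
            u (hP u hu).2 v (hP v hv).2 w (hP w hw).2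
        · have hne : P u ≠ P v := Qne _ _ hQ
          have huPv : u ∉ P v := fun h => hne (hPuniq u hu _ (hP v hv).1 h)
          have hwPv : w ∈ P v := he' ▸ (hP w hw).2
          have hcc : c u v = c u w := by
            rw [hsymm u v, hsymm u w]
            exact (hP v hv).1.2.1.1 v (hP v hv).2 w hwPv u huPv
          exact ⟨Or.inl hcc.symm, fun _ => hcc.symm⟩
        · have hne : P v ≠ P w := Qne _ _ hQ'
          have hvPu : v ∈ P u := he ▸ (hP v hv).2
          have hwPu : w ∉ P u := fun h => (he ▸ hne : P u ≠ P w) (hPuniq w hw _ (hP u hu).1 h).symm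
          have hcc : c u w = c v w := (hP u hu).1.2.1.1 u (hP u hu).2 v hvPu w hwPu
          exact ⟨Or.inr hcc, fun h => hcc.trans h.symm⟩
        · have hvPu : v ∈ P u := he ▸ (hP v hv).2
          have hwPu : w ∈ P u := (he.trans he') ▸ (hP w hw).2
          have hρ2' : ρ (P u) v w := he ▸ hρ2
          exact (hρ _ (hP u hu).1).2.2.2 u (hP u hu).2 v hvPu w hwPu hρ1 hρ2'

lemma T_trans (hsymm : ∀ u v : V, c u v = c v u) {r : V → V → Prop}
    (hr : GoodOrder c r Set.univ) (i : ℕ) (u v w : V)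
    (huv : (r u v ∧ c u v ≠ i) ∨ (r v u ∧ c u v = i))
    (hvw : (r v w ∧ c v w ≠ i) ∨ (r w v ∧ c v w = i)) :
    (r u w ∧ c u w ≠ i) ∨ (r w u ∧ c u w = i) := by
  obtain ⟨hirr, htot, htr, htrip⟩ := hr
  have irr : ∀ x, ¬ r x x := fun x => hirr x trivial
  have tr : ∀ x y z, r x y → r y z → r x z := fun x y z h h' =>
    htr x trivial y trivial z trivial trivial h h'
  have asym : ∀ x y, r x y → ¬ r y x := fun x y h h' => irr x (tr _ _ _ h h')
  have tot : ∀ x y, x ≠ y → r x y ∨ r y x := fun x y h => htot x trivial y trivial h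
  have F1 : ∀ p q s, r p q → r q s → c p q = i → c q s = i → c p s = i := by
    intro p q s h1 h2 e1 e2
    have := (htrip p trivial q trivial s trivial h1 h2).2 (e1.trans e2.symm)
    rw [this, e1]
  have F2 : ∀ p q s, r p q → r q s → c p s = i → c p q = i ∨ c q s = i := by
    intro p q s h1 h2 e
    rcases (htrip p trivial q trivial s trivial h1 h2).1 with h | h
    · exact Or.inl (h ▸ e)
    · exact Or.inr (h ▸ e)
  have hne_uw : u ≠ w := by
    rintro rfl
    rcases huv with ⟨h1, e1⟩ | ⟨h1, e1⟩ <;> rcases hvw with ⟨h2, e2⟩ | ⟨h2, e2⟩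
    · exact asym _ _ h1 h2
    · exact e1 (by rw [hsymm]; exact e2)
    · exact e2 (by rw [hsymm]; exact e1)
    · exact asym _ _ h1 h2
  rcases huv with ⟨h1, e1⟩ | ⟨h1, e1⟩ <;> rcases hvw with ⟨h2, e2⟩ | ⟨h2, e2⟩
  · refine Or.inl ⟨tr _ _ _ h1 h2, fun hz => ?_⟩
    rcases F2 u v w h1 h2 hz with h | h
    · exact e1 h
    · exact e2 h
  · rcases tot u w hne_uw with h | h
    · refine Or.inl ⟨h, fun hz => ?_⟩
      exact e1 (F1 u w v h h2 hz (by rw [hsymm]; exact e2))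
    · refine Or.inr ⟨h, ?_⟩
      rcases F2 w u v h h1 (by rw [hsymm]; exact e2) with h' | h'
      · rw [hsymm]; exact h'
      · exact absurd h' e1
  · rcases tot u w hne_uw with h | h
    · refine Or.inl ⟨h, fun hz => ?_⟩
      exact e2 (F1 v u w h1 h (by rw [hsymm]; exact e1) hz)
    · refine Or.inr ⟨h, ?_⟩
      rcases F2 v w u h2 h (by rw [hsymm]; exact e1) with h' | h'
      · exact absurd h' e2
      · rw [hsymm]; exact h'
  · refine Or.inr ⟨tr _ _ _ h2 h1, ?_⟩
    rw [hsymm]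
    exact F1 w v u h2 h1 (by rw [hsymm]; exact e2) (by rw [hsymm]; exact e1)

open Classical in
lemma exists_perm {n : ℕ} (s : Fin n → Fin n → Prop)
    (hirr : ∀ a, ¬ s a a)
    (htot : ∀ a b, a ≠ b → s a b ∨ s b a)
    (htr : ∀ a b d, s a b → s b d → s a d) :
    ∃ ρ : Equiv.Perm (Fin n), ∀ a b, s a b ↔ ρ a < ρ b := by
  classical
  set f : Fin n → ℕ := fun a => (Finset.univ.filter (fun x => s x a)).card with hf
  have hmono : ∀ a b, s a b → f a < f b := by
    intro a b hab
    apply Finset.card_lt_card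
    constructor
    · intro x hx
      simp only [Finset.mem_filter, Finset.mem_univ, true_and] at hx ⊢
      exact htr x a b hx hab
    · intro hsub
      have : a ∈ Finset.univ.filter (fun x => s x b) := by simp [hab]
      have := hsub this
      simp only [Finset.mem_filter] at this
      exact hirr a this.2
  have hlt : ∀ a, f a < n := by
    intro a
    have : (Finset.univ.filter (fun x => s x a)) ⊆ Finset.univ.erase a := by
      intro x hx
      simp only [Finset.mem_filter, Finset.mem_univ, true_and] at hx
      simp only [Finset.mem_erase, Finset.mem_univ, and_true]
      rintro rfl; exact hirr _ hx
    calc f a ≤ (Finset.univ.erase a).card := Finset.card_le_card this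
      _ < Finset.univ.card := Finset.card_erase_lt_of_mem (Finset.mem_univ a)
      _ = n := by simp
  set g : Fin n → Fin n := fun a => ⟨f a, hlt a⟩ with hg
  have hinj : Function.Injective g := by
    intro a b hab
    by_contra hne
    rcases htot a b hne with h | h
    · have := hmono a b h
      simp only [hg, Fin.mk.injEq] at hab; omega
    · have := hmono b a h
      simp only [hg, Fin.mk.injEq] at hab; omega
  have hbij : Function.Bijective g := Finite.injective_iff_bijective.mp hinj
  refine ⟨Equiv.ofBijective g hbij, fun a b => ?_⟩
  constructor
  · intro h
    simpa [Equiv.ofBijective, hg, Fin.lt_def] using hmono a b h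
  · intro h
    have hne : a ≠ b := by rintro rfl; exact lt_irrefl _ h
    rcases htot a b hne with h' | h'
    · exact h'
    · exfalso
      have := hmono b a h'
      simp only [Equiv.ofBijective, Fin.lt_def] at h
      simp [hg] at h
      omega

end Aux

/-- If for every strong prime module `M` of `G` with `|M| ≥ 2` the
quotient graph `G[M]/P_max(M)` is a complete edge-colored permutation graph, then `G`
is a complete edge-colored permutation graph. -/
theorem stmt14 {V : Type*} [Fintype V] [Nonempty V] (k : ℕ) (c : V → V → ℕ)
    (hc : IsCompleteColoring k c)
    (hq : ∀ M : Set V, IsStrongModule c M → 2 ≤ M.ncard → ¬ IsSeriesModule c M →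
      QuotientIsCECPG c M) :
    IsCECPG c := by
  classical
  obtain ⟨hsymm, -, -⟩ := hc
  obtain ⟨r, hr⟩ := goodOrder_exists hsymm hq (Set.univ : Set V).ncard Set.univ le_rfl univ_strong
  set e : V ≃ Fin (Fintype.card V) := Fintype.equivFin V with he
  obtain ⟨ρ, hρ⟩ := exists_perm (fun a b => r (e.symm a) (e.symm b))
    (fun a => hr.1 _ trivial)
    (fun a b hab => hr.2.1 _ trivial _ trivial (fun h => hab (e.symm.injective h)))
    (fun a b d h h' => hr.2.2.1 _ trivial _ trivial _ trivial trivial h h')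
  set ℓ : V ≃ Fin (Fintype.card V) := e.trans ρ with hℓdef
  have hℓ : ∀ u v : V, r u v ↔ ℓ u < ℓ v := by
    intro u v
    have := hρ (e u) (e v)
    simpa [hℓdef] using this
  have hti : ∀ i : ℕ, ∃ σ : Equiv.Perm (Fin (Fintype.card V)), ∀ a b,
      ((a < b ∧ c (ℓ.symm a) (ℓ.symm b) ≠ i) ∨ (b < a ∧ c (ℓ.symm a) (ℓ.symm b) = i)) ↔
        σ a < σ b := by
    intro i
    apply exists_perm
    · rintro a (⟨h, -⟩ | ⟨h, -⟩) <;> exact lt_irrefl _ h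
    · intro a b hab
      rcases hab.lt_or_gt with h | h
      · by_cases hcol : c (ℓ.symm a) (ℓ.symm b) = i
        · exact Or.inr (Or.inr ⟨h, by rw [hsymm]; exact hcol⟩)
        · exact Or.inl (Or.inl ⟨h, hcol⟩)
      · by_cases hcol : c (ℓ.symm a) (ℓ.symm b) = i
        · exact Or.inl (Or.inr ⟨h, hcol⟩)
        · exact Or.inr (Or.inl ⟨h, fun hh => hcol (by rw [hsymm]; exact hh)⟩)
    · intro a b d hab hbd
      have key : ∀ x y : V, ((ℓ x < ℓ y ∧ c x y ≠ i) ∨ (ℓ y < ℓ x ∧ c x y = i)) ↔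
          ((r x y ∧ c x y ≠ i) ∨ (r y x ∧ c x y = i)) := by
        intro x y
        rw [hℓ x y, hℓ y x]
      have hab' := hab
      have hbd' := hbd
      have h1 : (r (ℓ.symm a) (ℓ.symm b) ∧ c (ℓ.symm a) (ℓ.symm b) ≠ i) ∨
          (r (ℓ.symm b) (ℓ.symm a) ∧ c (ℓ.symm a) (ℓ.symm b) = i) := by
        rw [← key]
        simpa using hab'
      have h2 : (r (ℓ.symm b) (ℓ.symm d) ∧ c (ℓ.symm b) (ℓ.symm d) ≠ i) ∨
          (r (ℓ.symm d) (ℓ.symm b) ∧ c (ℓ.symm b) (ℓ.symm d) = i) := by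
        rw [← key]
        simpa using hbd'
      have h3 := T_trans hsymm hr i (ℓ.symm a) (ℓ.symm b) (ℓ.symm d) h1 h2
      rw [← key] at h3
      simpa using h3
  choose σ hσ using hti
  refine ⟨ℓ, fun i => (σ i)⁻¹, ?_⟩
  intro i u v
  simp only [monoEdge, inv_inv]
  constructor
  · rintro ⟨hne, hcuv⟩
    have hℓne : ℓ u ≠ ℓ v := fun h => hne (ℓ.injective h)
    rcases hℓne.lt_or_gt with h | h
    · refine Or.inr ⟨h, (hσ i (ℓ v) (ℓ u)).mp (Or.inr ⟨h, ?_⟩)⟩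
      simpa [hsymm v u] using hcuv
    · refine Or.inl ⟨h, (hσ i (ℓ u) (ℓ v)).mp (Or.inr ⟨h, ?_⟩)⟩
      simpa using hcuv
  · rintro (⟨h, h'⟩ | ⟨h, h'⟩)
    · rcases (hσ i (ℓ u) (ℓ v)).mpr h' with ⟨h2, -⟩ | ⟨-, hcEq⟩
      · exact absurd h (not_lt.mpr h2.le)
      · exact ⟨fun hh => lt_irrefl _ (hh ▸ h), by simpa using hcEq⟩
    · rcases (hσ i (ℓ v) (ℓ u)).mpr h' with ⟨h2, -⟩ | ⟨-, hcEq⟩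
      · exact absurd h (not_lt.mpr h2.le)
      · refine ⟨fun hh => lt_irrefl _ (hh ▸ h), ?_⟩
        have : c v u = i := by simpa using hcEq
        rw [hsymm]; exact this
end

section
/- A complete edge-colored graph G is the graph representation of a symbolic ultrametric if and only if G contains no rainbow triangle and every monochromatic subgraph of G is a simple permutation graph of a separable permutation. -/
/-- The permutation `π` is separable: it avoids the patterns 2413 and 3142. -/
def IsSeparablePerm {n : ℕ} (π : Equiv.Perm (Fin n)) : Prop :=
  (¬ ∃ i₁ i₂ i₃ i₄ : Fin n, i₁ < i₂ ∧ i₂ < i₃ ∧ i₃ < i₄ ∧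
      π i₃ < π i₁ ∧ π i₁ < π i₄ ∧ π i₄ < π i₂) ∧
  (¬ ∃ i₁ i₂ i₃ i₄ : Fin n, i₁ < i₂ ∧ i₂ < i₃ ∧ i₃ < i₄ ∧
      π i₂ < π i₄ ∧ π i₄ < π i₁ ∧ π i₁ < π i₃)

def Pat {V : Type*} (val pos : V → ℕ) : Prop :=
  ∃ a b c d : V, pos a < pos b ∧ pos b < pos c ∧ pos c < pos d ∧
    ((val c < val a ∧ val a < val d ∧ val d < val b) ∨
     (val b < val d ∧ val d < val a ∧ val a < val c))

def Good {V : Type*} (E : V → V → Prop) : Prop :=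
  ∃ val pos : V → ℕ, Function.Injective val ∧ Function.Injective pos ∧
    (∀ u v, E u v ↔ ((val v < val u ∧ pos u < pos v) ∨ (val u < val v ∧ pos v < pos u))) ∧
    ¬ Pat val pos

lemma exists_orderEquiv {V : Type*} [Fintype V] (f : V → ℕ) (hf : Function.Injective f) :
    ∃ e : V ≃ Fin (Fintype.card V), ∀ u v, (f u < f v ↔ e u < e v) := by
  classical
  set s : Finset ℕ := Finset.univ.image f with hs
  have hcard : s.card = Fintype.card V := by
    rw [hs, Finset.card_image_of_injective _ hf, Finset.card_univ]
  let g : V → Fin s.card := fun v => (s.orderIsoOfFin rfl).symm ⟨f v, by simp [hs]⟩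
  have hg : ∀ u v, f u < f v ↔ g u < g v := by
    intro u v
    show f u < f v ↔ (s.orderIsoOfFin rfl).symm _ < (s.orderIsoOfFin rfl).symm _
    rw [OrderIso.lt_iff_lt]
    exact Iff.symm Subtype.mk_lt_mk
  have hginj : Function.Injective g := by
    intro u v h
    have h1 := hg u v
    have h2 := hg v u
    rw [h] at h1 h2
    simp [lt_irrefl] at h1 h2
    exact hf (le_antisymm h2 h1)
  have hb : Function.Bijective g :=
    (Fintype.bijective_iff_injective_and_card g).2 ⟨hginj, by rw [Fintype.card_fin, hcard]⟩
  refine ⟨(Equiv.ofBijective g hb).trans (finCongr hcard), fun u v => ?_⟩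
  rw [hg u v]
  have fc : ∀ {m n : ℕ} (h : m = n) (x y : Fin m), (finCongr h x < finCongr h y ↔ x < y) := by
    intro m n h x y; subst h; rfl
  exact (fc hcard (g u) (g v)).symm

lemma good_to_perm {V : Type*} [Fintype V] {E : V → V → Prop} (h : Good E) :
    ∃ (ℓ : V ≃ Fin (Fintype.card V)) (π : Equiv.Perm (Fin (Fintype.card V))),
      IsPermGraph E ℓ π ∧ IsSeparablePerm π := by
  obtain ⟨val, pos, hvi, hpi, hedge, hpat⟩ := h
  obtain ⟨ev, hev⟩ := exists_orderEquiv val hvi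
  obtain ⟨ep, hep⟩ := exists_orderEquiv pos hpi
  have hπ : ∀ u : V, (ep.symm.trans ev : Equiv.Perm (Fin (Fintype.card V)))⁻¹ (ev u) = ep u := by
    intro u
    simp [Equiv.Perm.inv_def, Equiv.symm_trans_apply]
  refine ⟨ev, ep.symm.trans ev, ?_, ?_, ?_⟩
  · intro u v
    rw [hedge u v, hπ u, hπ v]
    exact or_congr (and_congr (hev v u) (hep u v)) (and_congr (hev u v) (hep v u))
  · rintro ⟨i1, i2, i3, i4, o1, o2, o3, q1, q2, q3⟩
    have ha : ∀ i : Fin (Fintype.card V), (ep.symm.trans ev) i = ev (ep.symm i) := fun i => rfl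
    refine hpat ⟨ep.symm i1, ep.symm i2, ep.symm i3, ep.symm i4, ?_, ?_, ?_, Or.inl ⟨?_, ?_, ?_⟩⟩
    · rw [hep]; simpa using o1
    · rw [hep]; simpa using o2
    · rw [hep]; simpa using o3
    · rw [hev]; simpa [ha] using q1
    · rw [hev]; simpa [ha] using q2
    · rw [hev]; simpa [ha] using q3
  · rintro ⟨i1, i2, i3, i4, o1, o2, o3, q1, q2, q3⟩
    have ha : ∀ i : Fin (Fintype.card V), (ep.symm.trans ev) i = ev (ep.symm i) := fun i => rfl
    refine hpat ⟨ep.symm i1, ep.symm i2, ep.symm i3, ep.symm i4, ?_, ?_, ?_, Or.inr ⟨?_, ?_, ?_⟩⟩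
    · rw [hep]; simpa using o1
    · rw [hep]; simpa using o2
    · rw [hep]; simpa using o3
    · rw [hev]; simpa [ha] using q1
    · rw [hev]; simpa [ha] using q2
    · rw [hev]; simpa [ha] using q3


lemma key18 (A B C D PA PB PC PD : ℕ)
    (h1 : (B<A ∧ PA<PB) ∨ (A<B ∧ PB<PA))
    (h2 : (C<B ∧ PB<PC) ∨ (B<C ∧ PC<PB))
    (h3 : (D<C ∧ PC<PD) ∨ (C<D ∧ PD<PC))
    (h4 : ¬((C<A ∧ PA<PC) ∨ (A<C ∧ PC<PA)))
    (h5 : ¬((D<A ∧ PA<PD) ∨ (A<D ∧ PD<PA)))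
    (h6 : ¬((D<B ∧ PB<PD) ∨ (B<D ∧ PD<PB)))
    (n1 : A ≠ C) (n2 : A ≠ D) (n3 : B ≠ D)
    (m1 : PA ≠ PC) (m2 : PA ≠ PD) (m3 : PB ≠ PD) :
    (PB<PA ∧ PA<PD ∧ PD<PC ∧ A<C ∧ C<B ∧ B<D) ∨
    (PD<PB ∧ PB<PC ∧ PC<PA ∧ C<D ∧ D<A ∧ A<B) ∨
    (PC<PD ∧ PD<PA ∧ PA<PB ∧ D<B ∧ B<C ∧ C<A) ∨
    (PA<PC ∧ PC<PB ∧ PB<PD ∧ B<A ∧ A<D ∧ D<C) := by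
  have g4 : (A<C ∧ PA<PC) ∨ (C<A ∧ PC<PA) := by
    rcases lt_or_gt_of_ne n1 with h|h
    · exact Or.inl ⟨h, lt_of_le_of_ne (not_lt.1 fun hh => h4 (Or.inr ⟨h, hh⟩)) m1⟩
    · exact Or.inr ⟨h, lt_of_le_of_ne (not_lt.1 fun hh => h4 (Or.inl ⟨h, hh⟩)) m1.symm⟩
  have g5 : (A<D ∧ PA<PD) ∨ (D<A ∧ PD<PA) := by
    rcases lt_or_gt_of_ne n2 with h|h
    · exact Or.inl ⟨h, lt_of_le_of_ne (not_lt.1 fun hh => h5 (Or.inr ⟨h, hh⟩)) m2⟩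
    · exact Or.inr ⟨h, lt_of_le_of_ne (not_lt.1 fun hh => h5 (Or.inl ⟨h, hh⟩)) m2.symm⟩
  have g6 : (B<D ∧ PB<PD) ∨ (D<B ∧ PD<PB) := by
    rcases lt_or_gt_of_ne n3 with h|h
    · exact Or.inl ⟨h, lt_of_le_of_ne (not_lt.1 fun hh => h6 (Or.inr ⟨h, hh⟩)) m3⟩
    · exact Or.inr ⟨h, lt_of_le_of_ne (not_lt.1 fun hh => h6 (Or.inl ⟨h, hh⟩)) m3.symm⟩
  clear h4 h5 h6
  rcases h1 with ⟨h1a,h1b⟩|⟨h1a,h1b⟩ <;> rcases h2 with ⟨h2a,h2b⟩|⟨h2a,h2b⟩ <;>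
    rcases h3 with ⟨h3a,h3b⟩|⟨h3a,h3b⟩ <;> rcases g4 with ⟨g4a,g4b⟩|⟨g4a,g4b⟩ <;>
    first
    | (exfalso; omega)
    | (exact Or.inl ⟨by omega,by omega,by omega,by omega,by omega,by omega⟩)
    | (exact Or.inr (Or.inl ⟨by omega,by omega,by omega,by omega,by omega,by omega⟩))
    | (exact Or.inr (Or.inr (Or.inl ⟨by omega,by omega,by omega,by omega,by omega,by omega⟩)))
    | (exact Or.inr (Or.inr (Or.inr ⟨by omega,by omega,by omega,by omega,by omega,by omega⟩)))

def P4Free {V : Type*} (E : V → V → Prop) : Prop :=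
  ¬ ∃ x y z w : V, x ≠ y ∧ x ≠ z ∧ x ≠ w ∧ y ≠ z ∧ y ≠ w ∧ z ≠ w ∧
      E x y ∧ E y z ∧ E z w ∧ ¬ E x z ∧ ¬ E x w ∧ ¬ E y w

lemma perm_sep_p4free {V : Type*} {n : ℕ} {E : V → V → Prop} {ℓ : V ≃ Fin n}
    {π : Equiv.Perm (Fin n)} (hpg : IsPermGraph E ℓ π) (hsep : IsSeparablePerm π) :
    P4Free E := by
  rintro ⟨x, y, z, w, d1, d2, d3, d4, d5, d6, e1, e2, e3, ne1, ne2, ne3⟩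
  have fv : ∀ u : V, π (π⁻¹ (ℓ u)) = ℓ u := fun u => Equiv.apply_symm_apply π (ℓ u)
  have hinj : ∀ u v : V, u ≠ v → (ℓ u ≠ ℓ v ∧ π⁻¹ (ℓ u) ≠ π⁻¹ (ℓ v)) := by
    intro u v huv
    have h1 : ℓ u ≠ ℓ v := fun h => huv (ℓ.injective h)
    exact ⟨h1, fun h => h1 ((π⁻¹ : Equiv.Perm (Fin n)).injective h)⟩
  have k := key18 (ℓ x).val (ℓ y).val (ℓ z).val (ℓ w).val
    (π⁻¹ (ℓ x)).val (π⁻¹ (ℓ y)).val (π⁻¹ (ℓ z)).val (π⁻¹ (ℓ w)).val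
    ((hpg x y).1 e1) ((hpg y z).1 e2) ((hpg z w).1 e3)
    (fun h => ne1 ((hpg x z).2 h)) (fun h => ne2 ((hpg x w).2 h)) (fun h => ne3 ((hpg y w).2 h))
    (Fin.val_ne_of_ne (hinj x z d2).1) (Fin.val_ne_of_ne (hinj x w d3).1)
    (Fin.val_ne_of_ne (hinj y w d5).1)
    (Fin.val_ne_of_ne (hinj x z d2).2) (Fin.val_ne_of_ne (hinj x w d3).2)
    (Fin.val_ne_of_ne (hinj y w d5).2)
  rcases k with ⟨c1, c2, c3, c4, c5, c6⟩ | ⟨c1, c2, c3, c4, c5, c6⟩ |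
      ⟨c1, c2, c3, c4, c5, c6⟩ | ⟨c1, c2, c3, c4, c5, c6⟩
  · exact hsep.2 ⟨π⁻¹ (ℓ y), π⁻¹ (ℓ x), π⁻¹ (ℓ w), π⁻¹ (ℓ z), c1, c2, c3, by
      rw [fv, fv]; exact c4, by rw [fv, fv]; exact c5, by rw [fv, fv]; exact c6⟩
  · exact hsep.1 ⟨π⁻¹ (ℓ w), π⁻¹ (ℓ y), π⁻¹ (ℓ z), π⁻¹ (ℓ x), c1, c2, c3, by
      rw [fv, fv]; exact c4, by rw [fv, fv]; exact c5, by rw [fv, fv]; exact c6⟩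
  · exact hsep.2 ⟨π⁻¹ (ℓ z), π⁻¹ (ℓ w), π⁻¹ (ℓ x), π⁻¹ (ℓ y), c1, c2, c3, by
      rw [fv, fv]; exact c4, by rw [fv, fv]; exact c5, by rw [fv, fv]; exact c6⟩
  · exact hsep.1 ⟨π⁻¹ (ℓ x), π⁻¹ (ℓ z), π⁻¹ (ℓ y), π⁻¹ (ℓ w), c1, c2, c3, by
      rw [fv, fv]; exact c4, by rw [fv, fv]; exact c5, by rw [fv, fv]; exact c6⟩

section SecB
variable {V : Type*} [Fintype V]

lemma good_union {E : V → V → Prop} (p : V → Prop) [DecidablePred p]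
    (hA : Good (fun a b : {v // p v} => E a.1 b.1))
    (hB : Good (fun a b : {v // ¬ p v} => E a.1 b.1))
    (hcross : ∀ u v, p u → ¬ p v → ¬ E u v ∧ ¬ E v u) : Good E := by
  classical
  obtain ⟨vA, pA, viA, piA, heA, hpA⟩ := hA
  obtain ⟨vB, pB, viB, piB, heB, hpB⟩ := hB
  set CV : ℕ := (Finset.univ.sup fun a : {v // p v} => vA a) + 1 with hCV
  set CP : ℕ := (Finset.univ.sup fun a : {v // p v} => pA a) + 1 with hCP
  have bValA : ∀ a : {v // p v}, vA a < CV :=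
    fun a => Nat.lt_succ_of_le (Finset.le_sup (Finset.mem_univ a))
  have bPosA : ∀ a : {v // p v}, pA a < CP :=
    fun a => Nat.lt_succ_of_le (Finset.le_sup (Finset.mem_univ a))
  set val : V → ℕ := fun v => if h : p v then vA ⟨v, h⟩ else CV + vB ⟨v, h⟩ with hval
  set pos : V → ℕ := fun v => if h : p v then pA ⟨v, h⟩ else CP + pB ⟨v, h⟩ with hpos
  have FA : ∀ x (h : p x), val x = vA ⟨x, h⟩ ∧ pos x = pA ⟨x, h⟩ := by
    intro x h; constructor <;> simp [hval, hpos, dif_pos h]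
  have FB : ∀ x (h : ¬ p x), val x = CV + vB ⟨x, h⟩ ∧ pos x = CP + pB ⟨x, h⟩ := by
    intro x h; constructor <;> simp [hval, hpos, dif_neg h]
  refine ⟨val, pos, ?_, ?_, ?_, ?_⟩
  · intro u v h
    by_cases hu : p u <;> by_cases hv : p v
    · have := (FA u hu).1; have := (FA v hv).1
      have : vA ⟨u, hu⟩ = vA ⟨v, hv⟩ := by omega
      exact congrArg Subtype.val (viA this)
    · have h1 := (FA u hu).1
      have h2 := (FB v hv).1
      have h3 := bValA ⟨u, hu⟩
      exact absurd h (by omega)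
    · have h1 := (FB u hu).1
      have h2 := (FA v hv).1
      have h3 := bValA ⟨v, hv⟩
      exact absurd h (by omega)
    · have := (FB u hu).1; have := (FB v hv).1
      have : vB ⟨u, hu⟩ = vB ⟨v, hv⟩ := by omega
      exact congrArg Subtype.val (viB this)
  · intro u v h
    by_cases hu : p u <;> by_cases hv : p v
    · have := (FA u hu).2; have := (FA v hv).2
      have : pA ⟨u, hu⟩ = pA ⟨v, hv⟩ := by omega
      exact congrArg Subtype.val (piA this)
    · have h1 := (FA u hu).2
      have h2 := (FB v hv).2
      have h3 := bPosA ⟨u, hu⟩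
      exact absurd h (by omega)
    · have h1 := (FB u hu).2
      have h2 := (FA v hv).2
      have h3 := bPosA ⟨v, hv⟩
      exact absurd h (by omega)
    · have := (FB u hu).2; have := (FB v hv).2
      have : pB ⟨u, hu⟩ = pB ⟨v, hv⟩ := by omega
      exact congrArg Subtype.val (piB this)
  · intro u v
    by_cases hu : p u <;> by_cases hv : p v
    · obtain ⟨e1, e2⟩ := FA u hu; obtain ⟨e3, e4⟩ := FA v hv
      rw [show E u v ↔ _ from heA ⟨u, hu⟩ ⟨v, hv⟩]
      constructor
      · rintro (⟨h1, h2⟩ | ⟨h1, h2⟩)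
        · exact Or.inl ⟨by omega, by omega⟩
        · exact Or.inr ⟨by omega, by omega⟩
      · rintro (⟨h1, h2⟩ | ⟨h1, h2⟩)
        · exact Or.inl ⟨by omega, by omega⟩
        · exact Or.inr ⟨by omega, by omega⟩
    · obtain ⟨e1, e2⟩ := FA u hu; obtain ⟨e3, e4⟩ := FB v hv
      have hb1 := bValA ⟨u, hu⟩; have hb2 := bPosA ⟨u, hu⟩
      constructor
      · intro h; exact absurd h (hcross u v hu hv).1
      · rintro (⟨h1, h2⟩ | ⟨h1, h2⟩) <;> omega
    · obtain ⟨e1, e2⟩ := FB u hu; obtain ⟨e3, e4⟩ := FA v hv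
      have hb1 := bValA ⟨v, hv⟩; have hb2 := bPosA ⟨v, hv⟩
      constructor
      · intro h; exact absurd h (hcross v u hv hu).2
      · rintro (⟨h1, h2⟩ | ⟨h1, h2⟩) <;> omega
    · obtain ⟨e1, e2⟩ := FB u hu; obtain ⟨e3, e4⟩ := FB v hv
      rw [show E u v ↔ _ from heB ⟨u, hu⟩ ⟨v, hv⟩]
      constructor
      · rintro (⟨h1, h2⟩ | ⟨h1, h2⟩)
        · exact Or.inl ⟨by omega, by omega⟩
        · exact Or.inr ⟨by omega, by omega⟩
      · rintro (⟨h1, h2⟩ | ⟨h1, h2⟩)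
        · exact Or.inl ⟨by omega, by omega⟩
        · exact Or.inr ⟨by omega, by omega⟩
  · rintro ⟨a, b, c, d, o1, o2, o3, pat⟩
    by_cases pa : p a <;> by_cases pb : p b <;> by_cases pc : p c <;> by_cases pd : p d <;>
      first
      | (obtain ⟨e1, e2⟩ := FA a pa
         obtain ⟨e3, e4⟩ := FA b pb
         obtain ⟨e5, e6⟩ := FA c pc
         obtain ⟨e7, e8⟩ := FA d pd
         exact hpA ⟨⟨a, pa⟩, ⟨b, pb⟩, ⟨c, pc⟩, ⟨d, pd⟩, by omega, by omega, by omega, by omega⟩)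
      | (obtain ⟨e1, e2⟩ := FB a pa
         obtain ⟨e3, e4⟩ := FB b pb
         obtain ⟨e5, e6⟩ := FB c pc
         obtain ⟨e7, e8⟩ := FB d pd
         exact hpB ⟨⟨a, pa⟩, ⟨b, pb⟩, ⟨c, pc⟩, ⟨d, pd⟩, by omega, by omega, by omega, by omega⟩)
      | (first
          | (obtain ⟨e1, e2⟩ := FA a pa
             have f1 := bValA ⟨a, pa⟩
             have g1 := bPosA ⟨a, pa⟩)
          | (obtain ⟨e1, e2⟩ := FB a pa)
         first
          | (obtain ⟨e3, e4⟩ := FA b pb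
             have f2 := bValA ⟨b, pb⟩
             have g2 := bPosA ⟨b, pb⟩)
          | (obtain ⟨e3, e4⟩ := FB b pb)
         first
          | (obtain ⟨e5, e6⟩ := FA c pc
             have f3 := bValA ⟨c, pc⟩
             have g3 := bPosA ⟨c, pc⟩)
          | (obtain ⟨e5, e6⟩ := FB c pc)
         first
          | (obtain ⟨e7, e8⟩ := FA d pd
             have f4 := bValA ⟨d, pd⟩
             have g4 := bPosA ⟨d, pd⟩)
          | (obtain ⟨e7, e8⟩ := FB d pd)
         omega)

end SecB

lemma good_join {V : Type*} [Fintype V] {E : V → V → Prop} (p : V → Prop) [DecidablePred p]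
    (hA : Good (fun a b : {v // p v} => E a.1 b.1))
    (hB : Good (fun a b : {v // ¬ p v} => E a.1 b.1))
    (hcross : ∀ u v, p u → ¬ p v → E u v ∧ E v u) : Good E := by
  classical
  obtain ⟨vA, pA, viA, piA, heA, hpA⟩ := hA
  obtain ⟨vB, pB, viB, piB, heB, hpB⟩ := hB
  set CV : ℕ := (Finset.univ.sup fun a : {v // p v} => vA a) + 1 with hCV
  set CP : ℕ := (Finset.univ.sup fun b : {v // ¬ p v} => pB b) + 1 with hCP
  have bValA : ∀ a : {v // p v}, vA a < CV :=
    fun a => Nat.lt_succ_of_le (Finset.le_sup (Finset.mem_univ a))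
  have bPosB : ∀ b : {v // ¬ p v}, pB b < CP :=
    fun b => Nat.lt_succ_of_le (Finset.le_sup (Finset.mem_univ b))
  set val : V → ℕ := fun v => if h : p v then vA ⟨v, h⟩ else CV + vB ⟨v, h⟩ with hval
  set pos : V → ℕ := fun v => if h : p v then CP + pA ⟨v, h⟩ else pB ⟨v, h⟩ with hpos
  have FA : ∀ x (h : p x), val x = vA ⟨x, h⟩ ∧ pos x = CP + pA ⟨x, h⟩ := by
    intro x h; constructor <;> simp [hval, hpos, dif_pos h]
  have FB : ∀ x (h : ¬ p x), val x = CV + vB ⟨x, h⟩ ∧ pos x = pB ⟨x, h⟩ := by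
    intro x h; constructor <;> simp [hval, hpos, dif_neg h]
  refine ⟨val, pos, ?_, ?_, ?_, ?_⟩
  · intro u v h
    by_cases hu : p u <;> by_cases hv : p v
    · have := (FA u hu).1; have := (FA v hv).1
      have : vA ⟨u, hu⟩ = vA ⟨v, hv⟩ := by omega
      exact congrArg Subtype.val (viA this)
    · have h1 := (FA u hu).1
      have h2 := (FB v hv).1
      have h3 := bValA ⟨u, hu⟩
      exact absurd h (by omega)
    · have h1 := (FB u hu).1
      have h2 := (FA v hv).1
      have h3 := bValA ⟨v, hv⟩
      exact absurd h (by omega)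
    · have := (FB u hu).1; have := (FB v hv).1
      have : vB ⟨u, hu⟩ = vB ⟨v, hv⟩ := by omega
      exact congrArg Subtype.val (viB this)
  · intro u v h
    by_cases hu : p u <;> by_cases hv : p v
    · have := (FA u hu).2; have := (FA v hv).2
      have : pA ⟨u, hu⟩ = pA ⟨v, hv⟩ := by omega
      exact congrArg Subtype.val (piA this)
    · have h1 := (FA u hu).2
      have h2 := (FB v hv).2
      have h3 := bPosB ⟨v, hv⟩
      exact absurd h (by omega)
    · have h1 := (FB u hu).2
      have h2 := (FA v hv).2
      have h3 := bPosB ⟨u, hu⟩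
      exact absurd h (by omega)
    · have := (FB u hu).2; have := (FB v hv).2
      have : pB ⟨u, hu⟩ = pB ⟨v, hv⟩ := by omega
      exact congrArg Subtype.val (piB this)
  · intro u v
    by_cases hu : p u <;> by_cases hv : p v
    · obtain ⟨e1, e2⟩ := FA u hu; obtain ⟨e3, e4⟩ := FA v hv
      rw [show E u v ↔ _ from heA ⟨u, hu⟩ ⟨v, hv⟩]
      constructor
      · rintro (⟨h1, h2⟩ | ⟨h1, h2⟩)
        · exact Or.inl ⟨by omega, by omega⟩
        · exact Or.inr ⟨by omega, by omega⟩
      · rintro (⟨h1, h2⟩ | ⟨h1, h2⟩)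
        · exact Or.inl ⟨by omega, by omega⟩
        · exact Or.inr ⟨by omega, by omega⟩
    · obtain ⟨e1, e2⟩ := FA u hu; obtain ⟨e3, e4⟩ := FB v hv
      have hb1 := bValA ⟨u, hu⟩; have hb2 := bPosB ⟨v, hv⟩
      exact iff_of_true (hcross u v hu hv).1 (Or.inr ⟨by omega, by omega⟩)
    · obtain ⟨e1, e2⟩ := FB u hu; obtain ⟨e3, e4⟩ := FA v hv
      have hb1 := bValA ⟨v, hv⟩; have hb2 := bPosB ⟨u, hu⟩
      exact iff_of_true (hcross v u hv hu).2 (Or.inl ⟨by omega, by omega⟩)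
    · obtain ⟨e1, e2⟩ := FB u hu; obtain ⟨e3, e4⟩ := FB v hv
      rw [show E u v ↔ _ from heB ⟨u, hu⟩ ⟨v, hv⟩]
      constructor
      · rintro (⟨h1, h2⟩ | ⟨h1, h2⟩)
        · exact Or.inl ⟨by omega, by omega⟩
        · exact Or.inr ⟨by omega, by omega⟩
      · rintro (⟨h1, h2⟩ | ⟨h1, h2⟩)
        · exact Or.inl ⟨by omega, by omega⟩
        · exact Or.inr ⟨by omega, by omega⟩
  · rintro ⟨a, b, c, d, o1, o2, o3, pat⟩
    by_cases pa : p a <;> by_cases pb : p b <;> by_cases pc : p c <;> by_cases pd : p d <;>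
      first
      | (obtain ⟨e1, e2⟩ := FA a pa
         obtain ⟨e3, e4⟩ := FA b pb
         obtain ⟨e5, e6⟩ := FA c pc
         obtain ⟨e7, e8⟩ := FA d pd
         exact hpA ⟨⟨a, pa⟩, ⟨b, pb⟩, ⟨c, pc⟩, ⟨d, pd⟩, by omega, by omega, by omega, by omega⟩)
      | (obtain ⟨e1, e2⟩ := FB a pa
         obtain ⟨e3, e4⟩ := FB b pb
         obtain ⟨e5, e6⟩ := FB c pc
         obtain ⟨e7, e8⟩ := FB d pd
         exact hpB ⟨⟨a, pa⟩, ⟨b, pb⟩, ⟨c, pc⟩, ⟨d, pd⟩, by omega, by omega, by omega, by omega⟩)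
      | (first
          | (obtain ⟨e1, e2⟩ := FA a pa
             have f1 := bValA ⟨a, pa⟩)
          | (obtain ⟨e1, e2⟩ := FB a pa
             have g1 := bPosB ⟨a, pa⟩)
         first
          | (obtain ⟨e3, e4⟩ := FA b pb
             have f2 := bValA ⟨b, pb⟩)
          | (obtain ⟨e3, e4⟩ := FB b pb
             have g2 := bPosB ⟨b, pb⟩)
         first
          | (obtain ⟨e5, e6⟩ := FA c pc
             have f3 := bValA ⟨c, pc⟩)
          | (obtain ⟨e5, e6⟩ := FB c pc
             have g3 := bPosB ⟨c, pc⟩)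
         first
          | (obtain ⟨e7, e8⟩ := FA d pd
             have f4 := bValA ⟨d, pd⟩)
          | (obtain ⟨e7, e8⟩ := FB d pd
             have g4 := bPosB ⟨d, pd⟩)
         omega)

section SecD
variable {V : Type*}

def EComplG (E : V → V → Prop) : V → V → Prop := fun u v => u ≠ v ∧ ¬ E u v

lemma ecompl_symm {E : V → V → Prop} (hs : ∀ u v, E u v → E v u) :
    ∀ u v, EComplG E u v → EComplG E v u :=
  fun u v h => ⟨h.1.symm, fun he => h.2 (hs v u he)⟩

lemma ecompl_irrefl (E : V → V → Prop) : ∀ u, ¬ EComplG E u u := fun u h => h.1 rfl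

lemma ecompl_p4free {E : V → V → Prop} (hs : ∀ u v, E u v → E v u) (h : P4Free E) :
    P4Free (EComplG E) := by
  rintro ⟨x, y, z, w, d1, d2, d3, d4, d5, d6, e1, e2, e3, ne1, ne2, ne3⟩
  have Exz : E x z := by
    by_contra he; exact ne1 ⟨d2, he⟩
  have Exw : E x w := by
    by_contra he; exact ne2 ⟨d3, he⟩
  have Eyw : E y w := by
    by_contra he; exact ne3 ⟨d5, he⟩
  exact h ⟨z, x, w, y, d2.symm, d6, d4.symm, d3, d1, d5.symm,
    hs x z Exz, Exw, hs y w Eyw, fun he => e3.2 he, fun he => e2.2 (hs z y he),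
    fun he => e1.2 he⟩

lemma sein_step [Fintype V] (E : V → V → Prop)
    (hsym : ∀ u v, E u v → E v u) (hp4 : P4Free E)
    (v0 : V) (p' : V → Prop)
    (hA : ∃ w, w ≠ v0 ∧ p' w) (hB : ∃ w, w ≠ v0 ∧ ¬ p' w)
    (hcross : ∀ u w, u ≠ v0 → w ≠ v0 → p' u → ¬ p' w → ¬ E u w) :
    ∃ p : V → Prop, (∃ v, p v) ∧ (∃ v, ¬ p v) ∧
      ((∀ u v, p u → ¬ p v → ¬ E u v) ∨ (∀ u v, p u → ¬ p v → E u v)) := by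
  classical
  by_cases c1 : ∀ w, w ≠ v0 → p' w → ¬ E v0 w
  · obtain ⟨wa, hwa0, hwap⟩ := hA
    refine ⟨fun x => x ≠ v0 ∧ p' x, ⟨wa, hwa0, hwap⟩, ⟨v0, fun h => h.1 rfl⟩, Or.inl ?_⟩
    rintro u v ⟨hu0, hup⟩ hv
    by_cases hv0 : v = v0
    · subst hv0
      exact fun he => c1 u hu0 hup (hsym u v he)
    · have hvp : ¬ p' v := fun hp => hv ⟨hv0, hp⟩
      exact hcross u v hu0 hv0 hup hvp
  by_cases c2 : ∀ w, w ≠ v0 → ¬ p' w → ¬ E v0 w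
  · obtain ⟨wb, hwb0, hwbp⟩ := hB
    refine ⟨fun x => x ≠ v0 ∧ ¬ p' x, ⟨wb, hwb0, hwbp⟩, ⟨v0, fun h => h.1 rfl⟩, Or.inl ?_⟩
    rintro u v ⟨hu0, hup⟩ hv
    by_cases hv0 : v = v0
    · subst hv0
      exact fun he => c2 u hu0 hup (hsym u v he)
    · have hvp : p' v := by
        by_contra hp; exact hv ⟨hv0, hp⟩
      exact fun he => hcross v u hv0 hu0 hvp hup (hsym u v he)
  · push_neg at c1 c2
    obtain ⟨a, ha0, hpa, hva⟩ := c1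
    obtain ⟨b, hb0, hpb, hvb⟩ := c2
    have subclaim : ∀ w, w ≠ v0 → ¬ E v0 w → ∀ x, x ≠ v0 → E v0 x → ¬ E w x := by
      intro w hw0 hvw x hx0 hvx hwx
      have hwx0 : w ≠ x := fun h => hvw (h ▸ hvx)
      by_cases hpw : p' w
      · have hpx : p' x := by
          by_contra hpx; exact hcross w x hw0 hx0 hpw hpx hwx
        have hbw : b ≠ w := fun h => hpb (h ▸ hpw)
        have hbx : b ≠ x := fun h => hpb (h ▸ hpx)
        exact hp4 ⟨w, x, v0, b, hwx0, hw0, hbw.symm, hx0, hbx.symm, hb0.symm,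
          hwx, hsym v0 x hvx, hvb,
          fun he => hvw (hsym w v0 he),
          hcross w b hw0 hb0 hpw hpb,
          hcross x b hx0 hb0 hpx hpb⟩
      · have hpx : ¬ p' x := fun hpx => hcross x w hx0 hw0 hpx hpw (hsym w x hwx)
        have haw : a ≠ w := fun h => hpw (h ▸ hpa)
        have hax : a ≠ x := fun h => hpx (h ▸ hpa)
        exact hp4 ⟨w, x, v0, a, hwx0, hw0, haw.symm, hx0, hax.symm, ha0.symm,
          hwx, hsym v0 x hvx, hva,
          fun he => hvw (hsym w v0 he),
          fun he => hcross a w ha0 hw0 hpa hpw (hsym w a he),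
          fun he => hcross a x ha0 hx0 hpa hpx (hsym x a he)⟩
    by_cases call : ∀ w, w ≠ v0 → E v0 w
    · refine ⟨fun x => x = v0, ⟨v0, rfl⟩, ⟨a, ha0⟩, Or.inr ?_⟩
      rintro u v rfl hv
      exact call v hv
    · push_neg at call
      obtain ⟨w0, hw00, hw0e⟩ := call
      refine ⟨fun x => x ≠ v0 ∧ ¬ E v0 x, ⟨w0, hw00, hw0e⟩, ⟨v0, fun h => h.1 rfl⟩, Or.inl ?_⟩
      rintro u v ⟨hu0, hue⟩ hv
      by_cases hv0 : v = v0
      · subst hv0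
        exact fun he => hue (hsym u v he)
      · have hve : E v0 v := by
          by_contra hh; exact hv ⟨hv0, hh⟩
        exact subclaim u hu0 hue v hv0 hve

end SecD

lemma p4free_restrict {V : Type*} {E : V → V → Prop} (hp4 : P4Free E) (q : V → Prop) :
    P4Free (fun a b : {v // q v} => E a.1 b.1) := by
  rintro ⟨x, y, z, w, d1, d2, d3, d4, d5, d6, e1, e2, e3, ne1, ne2, ne3⟩
  exact hp4 ⟨x.1, y.1, z.1, w.1, fun h => d1 (Subtype.ext h), fun h => d2 (Subtype.ext h),
    fun h => d3 (Subtype.ext h), fun h => d4 (Subtype.ext h), fun h => d5 (Subtype.ext h),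
    fun h => d6 (Subtype.ext h), e1, e2, e3, ne1, ne2, ne3⟩

lemma sein : ∀ (n : ℕ) {V : Type*} [Fintype V], Fintype.card V = n → 2 ≤ n →
    ∀ E : V → V → Prop, (∀ u v, E u v → E v u) → P4Free E →
    ∃ p : V → Prop, (∃ v, p v) ∧ (∃ v, ¬ p v) ∧
      ((∀ u v, p u → ¬ p v → ¬ E u v) ∨ (∀ u v, p u → ¬ p v → E u v)) := by
  intro n
  induction n using Nat.strong_induction_on with
  | _ n IH =>
    intro V _ hn h2 E hsym hp4
    classical
    have hne : Nonempty V := Fintype.card_pos_iff.1 (by omega)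
    obtain ⟨v0⟩ := hne
    by_cases hsmall : n = 2
    · obtain ⟨w0, hw0⟩ := Fintype.exists_ne_of_one_lt_card (by omega) v0
      have huniq : ∀ x y : V, x ≠ v0 → y ≠ v0 → x = y := by
        intro x y hx hy
        by_contra hxy
        have hcard3 : ({x, y, v0} : Finset V).card = 3 := by
          rw [Finset.card_insert_of_notMem (by simp [hxy, hx]),
            Finset.card_insert_of_notMem (by simp [hy]), Finset.card_singleton]
        have hle := Finset.card_le_univ ({x, y, v0} : Finset V)
        rw [hcard3] at hle
        rw [hn] at hle
        omega
      refine ⟨fun x => x ≠ v0, ⟨w0, hw0⟩, ⟨v0, by simp⟩, ?_⟩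
      by_cases hE : E w0 v0
      · right
        rintro u v hu hv
        have hv' : v = v0 := not_not.1 hv
        have hu' : u = w0 := huniq u w0 hu hw0
        rw [hu', hv']; exact hE
      · left
        rintro u v hu hv
        have hv' : v = v0 := not_not.1 hv
        have hu' : u = w0 := huniq u w0 hu hw0
        rw [hu', hv']; exact hE
    · have h3 : 3 ≤ n := by omega
      have hc' : Fintype.card {w : V // w ≠ v0} = n - 1 := by
        have := Fintype.card_subtype_compl (fun w : V => w = v0)
        rw [Fintype.card_subtype_eq, hn] at this
        exact this
      obtain ⟨p'', hA'', hB'', hbr⟩ := IH (n-1) (by omega) hc' (by omega)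
        (fun a b : {w : V // w ≠ v0} => E a.1 b.1)
        (fun a b h => hsym a.1 b.1 h) (p4free_restrict hp4 _)
      set p' : V → Prop := fun x => ∃ h : x ≠ v0, p'' ⟨x, h⟩ with hp'
      have hA : ∃ w, w ≠ v0 ∧ p' w := by
        obtain ⟨w, hw⟩ := hA''
        exact ⟨w.1, w.2, ⟨w.2, by rwa [Subtype.coe_eta]⟩⟩
      have hB : ∃ w, w ≠ v0 ∧ ¬ p' w := by
        obtain ⟨w, hw⟩ := hB''
        refine ⟨w.1, w.2, ?_⟩
        rintro ⟨h, hp⟩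
        exact hw (by rwa [Subtype.coe_eta] at hp)
      rcases hbr with hbr | hbr
      · apply sein_step E hsym hp4 v0 p' hA hB
        rintro u w hu0 hw0 ⟨hu0', hpu'⟩ hpw
        have hpw' : ¬ p'' ⟨w, hw0⟩ := fun hp => hpw ⟨hw0, hp⟩
        exact hbr ⟨u, hu0⟩ ⟨w, hw0⟩ hpu' hpw'
      · have hcross : ∀ u w, u ≠ v0 → w ≠ v0 → p' u → ¬ p' w → ¬ EComplG E u w := by
          rintro u w hu0 hw0 ⟨hu0', hpu'⟩ hpw ⟨hne2, hnE⟩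
          have hpw' : ¬ p'' ⟨w, hw0⟩ := fun hp => hpw ⟨hw0, hp⟩
          exact hnE (hbr ⟨u, hu0⟩ ⟨w, hw0⟩ hpu' hpw')
        obtain ⟨p, hp1, hp2, hp3⟩ := sein_step (EComplG E) (ecompl_symm hsym)
          (ecompl_p4free hsym hp4) v0 p' hA hB hcross
        refine ⟨p, hp1, hp2, ?_⟩
        rcases hp3 with h | h
        · right
          intro u v hu hv
          have hne : u ≠ v := fun he => hv (he ▸ hu)
          by_contra hE
          exact h u v hu hv ⟨hne, hE⟩
        · left
          intro u v hu hv
          exact (h u v hu hv).2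

lemma good_of_p4free : ∀ (n : ℕ) {V : Type*} [Fintype V], Fintype.card V = n →
    ∀ E : V → V → Prop, (∀ u v, E u v → E v u) → (∀ u, ¬ E u u) → P4Free E → Good E := by
  intro n
  induction n using Nat.strong_induction_on with
  | _ n IH =>
    intro V _ hn E hsym hirr hp4
    classical
    by_cases h1 : Fintype.card V ≤ 1
    · haveI := Fintype.card_le_one_iff_subsingleton.1 h1
      refine ⟨fun _ => 0, fun _ => 0, fun u v _ => Subsingleton.elim u v,
        fun u v _ => Subsingleton.elim u v, ?_, ?_⟩
      · intro u v
        constructor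
        · intro h
          cases Subsingleton.elim u v
          exact absurd h (hirr u)
        · rintro (⟨h, _⟩ | ⟨h, _⟩) <;> exact absurd h (lt_irrefl 0)
      · rintro ⟨a, b, c, d, o1, _⟩
        exact absurd o1 (lt_irrefl 0)
    · have h2 : 2 ≤ Fintype.card V := by omega
      obtain ⟨p, hpe, hpne, hbr⟩ := sein (Fintype.card V) rfl h2 E hsym hp4
      haveI : DecidablePred p := Classical.decPred p
      obtain ⟨x, hx⟩ := hpne
      obtain ⟨y, hy⟩ := hpe
      have cA : Fintype.card {v // p v} < n := hn ▸ Fintype.card_subtype_lt hx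
      have cB : Fintype.card {v // ¬ p v} < n :=
        hn ▸ Fintype.card_subtype_lt (x := y) (not_not.2 hy)
      have hGA : Good (fun a b : {v // p v} => E a.1 b.1) :=
        IH _ cA rfl _ (fun a b h => hsym _ _ h) (fun a h => hirr _ h) (p4free_restrict hp4 _)
      have hGB : Good (fun a b : {v // ¬ p v} => E a.1 b.1) :=
        IH _ cB rfl _ (fun a b h => hsym _ _ h) (fun a h => hirr _ h) (p4free_restrict hp4 _)
      rcases hbr with hbr | hbr
      · exact good_union p hGA hGB
          (fun u v hu hv => ⟨hbr u v hu hv, fun he => hbr u v hu hv (hsym v u he)⟩)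
      · exact good_join p hGA hGB
          (fun u v hu hv => ⟨hbr u v hu hv, hsym u v (hbr u v hu hv)⟩)

lemma monoEdge_p4free {V : Type*} {k : ℕ} {c : V → V → ℕ} (hc : IsCompleteColoring k c)
    (hU2 : ∀ x y z : V, x ≠ y → x ≠ z → y ≠ z →
        c x y = c x z ∨ c x y = c y z ∨ c x z = c y z)
    (hU3 : ¬ ∃ x y u v : V, x ≠ y ∧ x ≠ u ∧ x ≠ v ∧ y ≠ u ∧ y ≠ v ∧ u ≠ v ∧
        c x y = c y u ∧ c y u = c u v ∧ c x y ≠ c v y ∧ c v y = c x v ∧ c x v = c x u)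
    (i : ℕ) : P4Free (monoEdge c i) := by
  rintro ⟨x, y, z, w, d1, d2, d3, d4, d5, d6, e1, e2, e3, ne1, ne2, ne3⟩
  have hxz : c x z ≠ i := fun h => ne1 ⟨d2, h⟩
  have hxw : c x w ≠ i := fun h => ne2 ⟨d3, h⟩
  have hyw : c y w ≠ i := fun h => ne3 ⟨d5, h⟩
  have h1 : c x z = c x w := by
    rcases hU2 x z w d2 d3 d6 with h | h | h
    · exact h
    · exact absurd (h.trans e3.2) hxz
    · exact absurd (h.trans e3.2) hxw
  have h2 : c x w = c y w := by
    rcases hU2 x y w d1 d3 d5 with h | h | h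
    · exact absurd (h.symm.trans e1.2) hxw
    · exact absurd (h.symm.trans e1.2) hyw
    · exact h
  refine hU3 ⟨x, y, z, w, d1, d2, d3, d4, d5, d6, e1.2.trans e2.2.symm,
    e2.2.trans e3.2.symm, ?_, ?_, ?_⟩
  · rw [e1.2, hc.1 w y]
    exact fun h => hyw h.symm
  · rw [hc.1 w y]
    exact h2.symm
  · exact h1.symm

/-- A complete `k`-edge-colored graph `G` is the graph representation of
a symbolic ultrametric (i.e. its coloring satisfies (U2) and (U3)) if and only if `G`
contains no rainbow triangle and every monochromatic subgraph of `G` is a simple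
permutation graph of a separable permutation. -/
theorem stmt18 {V : Type*} [Fintype V] (k : ℕ) (c : V → V → ℕ)
    (hcard : 2 ≤ Fintype.card V) (hc : IsCompleteColoring k c) :
    ((∀ x y z : V, x ≠ y → x ≠ z → y ≠ z →
        c x y = c x z ∨ c x y = c y z ∨ c x z = c y z) ∧
     (¬ ∃ x y u v : V, x ≠ y ∧ x ≠ u ∧ x ≠ v ∧ y ≠ u ∧ y ≠ v ∧ u ≠ v ∧
        c x y = c y u ∧ c y u = c u v ∧ c x y ≠ c v y ∧ c v y = c x v ∧ c x v = c x u))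
    ↔
    (¬ HasRainbowTriangle c ∧
      ∀ i ∈ Finset.Icc 1 k,
        ∃ (ℓᵢ : V ≃ Fin (Fintype.card V)) (πᵢ : Equiv.Perm (Fin (Fintype.card V))),
          IsPermGraph (monoEdge c i) ℓᵢ πᵢ ∧ IsSeparablePerm πᵢ) := by
  constructor
  · rintro ⟨hU2, hU3⟩
    constructor
    · rintro ⟨u, v, w, h1, h2, h3, n1, n2, n3⟩
      rcases hU2 u v w h1 h2 h3 with h | h | h
      · exact n1 h
      · exact n2 h
      · exact n3 h
    · intro i _
      have hsym : ∀ u v, monoEdge c i u v → monoEdge c i v u :=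
        fun u v h => ⟨h.1.symm, (hc.1 v u).trans h.2⟩
      have hirr : ∀ u, ¬ monoEdge c i u u := fun u h => h.1 rfl
      have hgood : Good (monoEdge c i) :=
        good_of_p4free (Fintype.card V) rfl (monoEdge c i) hsym hirr
          (monoEdge_p4free hc hU2 hU3 i)
      obtain ⟨ℓ, π, hpg, hsep⟩ := good_to_perm hgood
      exact ⟨ℓ, π, hpg, hsep⟩
  · rintro ⟨hnr, hperm⟩
    constructor
    · intro x y z hxy hxz hyz
      by_contra h
      push_neg at h
      exact hnr ⟨x, y, z, hxy, hxz, hyz, h.1, h.2.1, h.2.2⟩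
    · rintro ⟨x, y, u, v, d1, d2, d3, d4, d5, d6, q1, q2, q3, q4, q5⟩
      have hi : c x y ∈ Finset.Icc 1 k := hc.2.1 x y d1
      obtain ⟨ℓ, π, hpg, hsep⟩ := hperm (c x y) hi
      have hxu : c x u ≠ c x y := by
        intro h
        exact q3 ((h.symm.trans q5.symm).trans q4.symm).symm.symm
      have hxv : c x v ≠ c x y := fun h => hxu (q5 ▸ h)
      have hyv : c y v ≠ c x y := by
        rw [hc.1 y v]
        exact fun h => q3 h.symm
      exact (perm_sep_p4free hpg hsep) ⟨x, y, u, v, d1, d2, d3, d4, d5, d6,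
        ⟨d1, rfl⟩, ⟨d4, q1.symm⟩, ⟨d6, (q1.trans q2).symm⟩,
        fun h => hxu h.2, fun h => hxv h.2, fun h => hyv h.2⟩
end

section
/- Let G together with a labeling ℓ be a simple permutation graph of a permutation π of {1,…,n}. Then π is separable if and only if G is a cograph. -/
/-- The graph with edge relation `E` contains an induced path on four vertices. -/
def HasInducedP4 {V : Type*} (E : V → V → Prop) : Prop :=
  ∃ a b c d : V, a ≠ b ∧ a ≠ c ∧ a ≠ d ∧ b ≠ c ∧ b ≠ d ∧ c ≠ d ∧
    E a b ∧ E b c ∧ E c d ∧ ¬ E a c ∧ ¬ E a d ∧ ¬ E b d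


private lemma inv_key {n : ℕ} (π : Equiv.Perm (Fin n)) (a b c d : Fin n)
    (dac : a ≠ c) (dad : a ≠ d) (dbd : b ≠ d)
    (h1 : b < c) (h2 : π c < π b)
    (hab : (π b < π a ∧ a < b) ∨ (π a < π b ∧ b < a))
    (hcd : (π d < π c ∧ c < d) ∨ (π c < π d ∧ d < c))
    (nac : ¬ ((π c < π a ∧ a < c) ∨ (π a < π c ∧ c < a)))
    (nad : ¬ ((π d < π a ∧ a < d) ∨ (π a < π d ∧ d < a)))
    (nbd : ¬ ((π d < π b ∧ b < d) ∨ (π b < π d ∧ d < b))) :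
    (∃ i₁ i₂ i₃ i₄ : Fin n, i₁ < i₂ ∧ i₂ < i₃ ∧ i₃ < i₄ ∧
      π i₃ < π i₁ ∧ π i₁ < π i₄ ∧ π i₄ < π i₂) ∨
    (∃ i₁ i₂ i₃ i₄ : Fin n, i₁ < i₂ ∧ i₂ < i₃ ∧ i₃ < i₄ ∧
      π i₂ < π i₄ ∧ π i₄ < π i₁ ∧ π i₁ < π i₃) := by
  have vac : (π a : ℕ) ≠ (π c : ℕ) := fun hh => dac (π.injective (Fin.val_injective hh))
  have vad : (π a : ℕ) ≠ (π d : ℕ) := fun hh => dad (π.injective (Fin.val_injective hh))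
  have vbd : (π b : ℕ) ≠ (π d : ℕ) := fun hh => dbd (π.injective (Fin.val_injective hh))
  have pac : (a : ℕ) ≠ (c : ℕ) := fun hh => dac (Fin.val_injective hh)
  have pad : (a : ℕ) ≠ (d : ℕ) := fun hh => dad (Fin.val_injective hh)
  have pbd : (b : ℕ) ≠ (d : ℕ) := fun hh => dbd (Fin.val_injective hh)
  simp only [Fin.lt_def] at h1 h2 hab hcd nac nad nbd
  rcases lt_trichotomy (a : ℕ) (c : ℕ) with hlt | heq | hgt
  · exact Or.inr ⟨b, a, d, c, by omega, by omega, by omega, by omega, by omega, by omega⟩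
  · exact absurd heq pac
  · exact Or.inl ⟨d, b, c, a, by omega, by omega, by omega, by omega, by omega, by omega⟩

private lemma inv_key2 {n : ℕ} (π : Equiv.Perm (Fin n)) (a b c d : Fin n)
    (dac : a ≠ c) (dad : a ≠ d) (dbd : b ≠ d)
    (hab : (π b < π a ∧ a < b) ∨ (π a < π b ∧ b < a))
    (hbc : (π c < π b ∧ b < c) ∨ (π b < π c ∧ c < b))
    (hcd : (π d < π c ∧ c < d) ∨ (π c < π d ∧ d < c))
    (nac : ¬ ((π c < π a ∧ a < c) ∨ (π a < π c ∧ c < a)))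
    (nad : ¬ ((π d < π a ∧ a < d) ∨ (π a < π d ∧ d < a)))
    (nbd : ¬ ((π d < π b ∧ b < d) ∨ (π b < π d ∧ d < b))) :
    (∃ i₁ i₂ i₃ i₄ : Fin n, i₁ < i₂ ∧ i₂ < i₃ ∧ i₃ < i₄ ∧
      π i₃ < π i₁ ∧ π i₁ < π i₄ ∧ π i₄ < π i₂) ∨
    (∃ i₁ i₂ i₃ i₄ : Fin n, i₁ < i₂ ∧ i₂ < i₃ ∧ i₃ < i₄ ∧
      π i₂ < π i₄ ∧ π i₄ < π i₁ ∧ π i₁ < π i₃) := by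
  rcases hbc with ⟨hv, hp⟩ | ⟨hv, hp⟩
  · exact inv_key π a b c d dac dad dbd hp hv hab hcd nac nad nbd
  · exact inv_key π d c b a dbd.symm dad.symm dac.symm hp hv
      hcd.symm hab.symm
      (fun hh => nbd hh.symm) (fun hh => nad hh.symm) (fun hh => nac hh.symm)

/-- If `(G,ℓ)` is a simple permutation graph of `π`, then `π` is
separable if and only if `G` is a cograph (contains no induced path on four
vertices). -/
theorem stmt19 {V : Type*} {n : ℕ} (E : V → V → Prop) (ℓ : V ≃ Fin n)
    (π : Equiv.Perm (Fin n)) (h : IsPermGraph E ℓ π) :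
    IsSeparablePerm π ↔ ¬ HasInducedP4 E := by
  constructor
  · rintro ⟨hs1, hs2⟩ ⟨a, b, c, d, dab, dac, dad, dbc, dbd, dcd,
      eab, ebc, ecd, nac, nad, nbd⟩
    rw [h] at eab ebc ecd nac nad nbd
    have pA : π (π⁻¹ (ℓ a)) = ℓ a := π.apply_symm_apply (ℓ a)
    have pB : π (π⁻¹ (ℓ b)) = ℓ b := π.apply_symm_apply (ℓ b)
    have pC : π (π⁻¹ (ℓ c)) = ℓ c := π.apply_symm_apply (ℓ c)
    have pD : π (π⁻¹ (ℓ d)) = ℓ d := π.apply_symm_apply (ℓ d)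
    rw [← pA, ← pB] at eab
    rw [← pB, ← pC] at ebc
    rw [← pC, ← pD] at ecd
    rw [← pA, ← pC] at nac
    rw [← pA, ← pD] at nad
    rw [← pB, ← pD] at nbd
    simp only [Equiv.Perm.coe_inv, Equiv.symm_apply_apply] at eab ebc ecd nac nad nbd
    have dAC : π⁻¹ (ℓ a) ≠ π⁻¹ (ℓ c) := fun hh => dac (ℓ.injective (by rw [← pA, ← pC, hh]))
    have dAD : π⁻¹ (ℓ a) ≠ π⁻¹ (ℓ d) := fun hh => dad (ℓ.injective (by rw [← pA, ← pD, hh]))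
    have dBD : π⁻¹ (ℓ b) ≠ π⁻¹ (ℓ d) := fun hh => dbd (ℓ.injective (by rw [← pB, ← pD, hh]))
    rcases inv_key2 π (π⁻¹ (ℓ a)) (π⁻¹ (ℓ b)) (π⁻¹ (ℓ c)) (π⁻¹ (ℓ d))
      dAC dAD dBD eab ebc ecd nac nad nbd with pat | pat
    · exact hs1 pat
    · exact hs2 pat
  · intro hP4
    have hE : ∀ u v : V, E u v ↔
        ((ℓ v < ℓ u ∧ π⁻¹ (ℓ u) < π⁻¹ (ℓ v)) ∨ (ℓ u < ℓ v ∧ π⁻¹ (ℓ v) < π⁻¹ (ℓ u))) := h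
    constructor
    · rintro ⟨i₁, i₂, i₃, i₄, h12, h23, h34, v31, v14, v42⟩
      -- pattern 2413: path x1 - x3 - x2 - x4
      refine hP4 ⟨ℓ.symm (π i₁), ℓ.symm (π i₃), ℓ.symm (π i₂), ℓ.symm (π i₄), ?_, ?_, ?_,
        ?_, ?_, ?_, ?_, ?_, ?_, ?_, ?_, ?_⟩ <;>
        simp only [hE, ne_eq, EmbeddingLike.apply_eq_iff_eq, Equiv.apply_symm_apply,
          Equiv.Perm.coe_inv, Equiv.symm_apply_apply, Fin.lt_def, Fin.ext_iff, not_or, not_and, not_lt] at * <;>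
        omega
    · rintro ⟨i₁, i₂, i₃, i₄, h12, h23, h34, v24, v41, v13⟩
      -- pattern 3142: path x2 - x1 - x4 - x3
      refine hP4 ⟨ℓ.symm (π i₂), ℓ.symm (π i₁), ℓ.symm (π i₄), ℓ.symm (π i₃), ?_, ?_, ?_,
        ?_, ?_, ?_, ?_, ?_, ?_, ?_, ?_, ?_⟩ <;>
        simp only [hE, ne_eq, EmbeddingLike.apply_eq_iff_eq, Equiv.apply_symm_apply,
          Equiv.Perm.coe_inv, Equiv.symm_apply_apply, Fin.lt_def, Fin.ext_iff, not_or, not_and, not_lt] at * <;>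
        omega
end
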